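/- Let Ω = (0,1)^d, and let f ∈ L²(Ω) with ∫_Ω f dx = 0. Define the energy functional E_P(u) = ∫_Ω |∇u|² dx + (∫_Ω u dx)² − 2∫_Ω f u dx on H¹(Ω), and let u* ∈ H¹(Ω) be the weak solution of −Δu = f with homogeneous Neumann boundary condition satisfying ∫_Ω u* dx = 0. Then for every u ∈ H¹(Ω), E_P(u) − E_P(u*) ≤ ‖u − u*‖²_{H¹(Ω)} ≤ C_P (E_P(u) − E_P(u*)), where C_P = max{2c_P + 1, 2} and c_P is the Poincaré constant of Ω. -/

import Mathlib

open MeasureTheory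
open scoped RealInnerProductSpace

/-- The uniform measure on the open unit cube `Ω = (0,1)^d`. -/
noncomputable def cubeMeasure (d : ℕ) : Measure (EuclideanSpace ℝ (Fin d)) :=
  volume.restrict (WithLp.ofLp ⁻¹' Set.univ.pi fun _ : Fin d => Set.Ioo (0 : ℝ) 1)

/-- Membership in (a smooth core of) `H¹(Ω)`: differentiable with `u` and `‖∇u‖` in `L²`. -/
def MemH1 (d : ℕ) (u : EuclideanSpace ℝ (Fin d) → ℝ) : Prop :=
  Differentiable ℝ u ∧ MemLp u 2 (cubeMeasure d) ∧
    MemLp (fun x => ‖gradient u x‖) 2 (cubeMeasure d)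

/-- The Deep Ritz energy functional for the Poisson equation with Neumann boundary:
`E_P(u) = ∫ |∇u|² + (∫ u)² - 2∫ f u`. -/
noncomputable def poissonEnergy (d : ℕ) (f u : EuclideanSpace ℝ (Fin d) → ℝ) : ℝ :=
  (∫ x, ‖gradient u x‖ ^ 2 ∂cubeMeasure d) + (∫ x, u x ∂cubeMeasure d) ^ 2 -
    2 * ∫ x, f x * u x ∂cubeMeasure d

/-- Squared `H¹(Ω)` distance. -/
noncomputable def H1distSq (d : ℕ) (u v : EuclideanSpace ℝ (Fin d) → ℝ) : ℝ :=
  (∫ x, (u x - v x) ^ 2 ∂cubeMeasure d) +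
    ∫ x, ‖gradient u x - gradient v x‖ ^ 2 ∂cubeMeasure d

instance cubeMeasure_prob (d : ℕ) : IsProbabilityMeasure (cubeMeasure d) := by
  constructor
  rw [cubeMeasure, Measure.restrict_apply_univ]
  rw [(PiLp.volume_preserving_ofLp (Fin d)).measure_preimage
    (MeasurableSet.univ_pi fun _ => measurableSet_Ioo).nullMeasurableSet]
  rw [volume_pi_pi]
  simp

lemma measurable_grad {d : ℕ} (u : EuclideanSpace ℝ (Fin d) → ℝ) :
    Measurable (fun x => gradient u x) := by
  have h : (fun x => gradient u x) =
      (fun L => (InnerProductSpace.toDual ℝ (EuclideanSpace ℝ (Fin d))).symm L) ∘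
        (fun x => fderiv ℝ u x) := rfl
  rw [h]
  exact ((InnerProductSpace.toDual ℝ _).symm.continuous.measurable).comp (measurable_fderiv ℝ u)

lemma integrable_mul_L2 {d : ℕ} {f g : EuclideanSpace ℝ (Fin d) → ℝ}
    (hf : MemLp f 2 (cubeMeasure d)) (hg : MemLp g 2 (cubeMeasure d)) :
    Integrable (fun x => f x * g x) (cubeMeasure d) := by
  refine Integrable.mono' (hf.integrable_sq.add hg.integrable_sq)
    (hf.aestronglyMeasurable.mul hg.aestronglyMeasurable) ?_
  filter_upwards with x
  have h := sq_nonneg (|f x| - |g x|)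
  simp only [Pi.add_apply]
  rw [Real.norm_eq_abs, abs_mul]
  nlinarith [abs_nonneg (f x), abs_nonneg (g x), sq_abs (f x), sq_abs (g x),
    sq_nonneg (f x), sq_nonneg (g x)]

lemma integrable_inner_grad {d : ℕ} {u v : EuclideanSpace ℝ (Fin d) → ℝ}
    (hu : MemH1 d u) (hv : MemH1 d v) :
    Integrable (fun x => ⟪gradient u x, gradient v x⟫) (cubeMeasure d) := by
  refine Integrable.mono' ((hu.2.2.integrable_sq).add (hv.2.2.integrable_sq))
    (((measurable_grad u).inner (measurable_grad v)).aestronglyMeasurable) ?_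
  filter_upwards with x
  have h1 := abs_real_inner_le_norm (gradient u x) (gradient v x)
  have h2 := sq_nonneg (‖gradient u x‖ - ‖gradient v x‖)
  simp only [Pi.add_apply]
  rw [Real.norm_eq_abs]
  nlinarith [norm_nonneg (gradient u x), norm_nonneg (gradient v x),
    sq_nonneg ‖gradient u x‖, sq_nonneg ‖gradient v x‖]

lemma grad_sub {d : ℕ} {u v : EuclideanSpace ℝ (Fin d) → ℝ}
    (hu : Differentiable ℝ u) (hv : Differentiable ℝ v) (x : EuclideanSpace ℝ (Fin d)) :
    gradient (fun y => u y - v y) x = gradient u x - gradient v x := by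
  have h : HasGradientAt (fun y => u y - v y) (gradient u x - gradient v x) x := by
    rw [hasGradientAt_iff_hasFDerivAt, map_sub]
    exact ((hu x).hasGradientAt.hasFDerivAt).sub ((hv x).hasGradientAt.hasFDerivAt)
  exact h.gradient

lemma memH1_sub {d : ℕ} {u v : EuclideanSpace ℝ (Fin d) → ℝ}
    (hu : MemH1 d u) (hv : MemH1 d v) : MemH1 d (fun x => u x - v x) := by
  refine ⟨hu.1.sub hv.1, hu.2.1.sub hv.2.1, MemLp.of_le (hu.2.2.add hv.2.2) ?_ ?_⟩
  · exact (Measurable.norm (measurable_grad (fun x => u x - v x))).aestronglyMeasurable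
  · filter_upwards with x
    rw [grad_sub hu.1 hv.1 x]
    simp only [Pi.add_apply, Real.norm_eq_abs, abs_norm]
    exact le_trans (norm_sub_le _ _) (le_abs_self _)

/-- Strong convexity/smoothness of the Poisson energy around the weak Neumann solution:
`E_P(u) - E_P(u*) ≤ ‖u - u*‖²_{H¹} ≤ C_P (E_P(u) - E_P(u*))` with
`C_P = max (2 c_P + 1) 2`. -/
theorem poisson_energy_equiv_H1 (d : ℕ) (f ustar : EuclideanSpace ℝ (Fin d) → ℝ)
    (hf : MemLp f 2 (cubeMeasure d))
    (hfmean : ∫ x, f x ∂cubeMeasure d = 0)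
    (hustar : MemH1 d ustar)
    (hmean : ∫ x, ustar x ∂cubeMeasure d = 0)
    (hweak : ∀ v, MemH1 d v →
      ∫ x, ⟪gradient ustar x, gradient v x⟫ ∂cubeMeasure d = ∫ x, f x * v x ∂cubeMeasure d)
    (cP : ℝ) (hcP : 0 ≤ cP)
    (hpoincare : ∀ v, MemH1 d v →
      ∫ x, (v x - ∫ y, v y ∂cubeMeasure d) ^ 2 ∂cubeMeasure d ≤
        cP * ∫ x, ‖gradient v x‖ ^ 2 ∂cubeMeasure d) :
    ∀ u, MemH1 d u →
      poissonEnergy d f u - poissonEnergy d f ustar ≤ H1distSq d u ustar ∧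
      H1distSq d u ustar ≤
        max (2 * cP + 1) 2 * (poissonEnergy d f u - poissonEnergy d f ustar) := by
  intro u hu
  have hwH1 : MemH1 d (fun x => u x - ustar x) := memH1_sub hu hustar
  have hgradw : ∀ x, gradient (fun y => u y - ustar y) x = gradient u x - gradient ustar x :=
    grad_sub hu.1 hustar.1
  -- integrability facts
  have hIu : Integrable u (cubeMeasure d) := hu.2.1.integrable one_le_two
  have hIust : Integrable ustar (cubeMeasure d) := hustar.2.1.integrable one_le_two
  have hIw : Integrable (fun x => u x - ustar x) (cubeMeasure d) := hIu.sub hIust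
  have hIgu : Integrable (fun x => ‖gradient u x‖ ^ 2) (cubeMeasure d) := hu.2.2.integrable_sq
  have hIgust : Integrable (fun x => ‖gradient ustar x‖ ^ 2) (cubeMeasure d) :=
    hustar.2.2.integrable_sq
  have hIgw : Integrable (fun x => ‖gradient u x - gradient ustar x‖ ^ 2) (cubeMeasure d) := by
    have h := hwH1.2.2.integrable_sq
    simpa only [hgradw] using h
  have hIinner : Integrable (fun x => ⟪gradient ustar x, gradient u x - gradient ustar x⟫)
      (cubeMeasure d) := by
    have h := integrable_inner_grad hustar hwH1
    simpa only [hgradw] using h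
  have hIfust : Integrable (fun x => f x * ustar x) (cubeMeasure d) :=
    integrable_mul_L2 hf hustar.2.1
  have hIfw : Integrable (fun x => f x * (u x - ustar x)) (cubeMeasure d) :=
    integrable_mul_L2 hf hwH1.2.1
  have hIw2 : Integrable (fun x => (u x - ustar x) ^ 2) (cubeMeasure d) :=
    hwH1.2.1.integrable_sq
  -- the mean of `u - ustar` equals the mean of `u`
  have hintw : ∫ x, (u x - ustar x) ∂cubeMeasure d = ∫ x, u x ∂cubeMeasure d := by
    rw [integral_sub hIu hIust, hmean, sub_zero]
  -- weak formulation applied to `u - ustar`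
  have hweakw : ∫ x, ⟪gradient ustar x, gradient u x - gradient ustar x⟫ ∂cubeMeasure d =
      ∫ x, f x * (u x - ustar x) ∂cubeMeasure d := by
    have h := hweak (fun x => u x - ustar x) hwH1
    simpa only [hgradw] using h
  -- expansion of the gradient term
  have hgexp : ∫ x, ‖gradient u x‖ ^ 2 ∂cubeMeasure d =
      (∫ x, ‖gradient ustar x‖ ^ 2 ∂cubeMeasure d) +
        2 * (∫ x, ⟪gradient ustar x, gradient u x - gradient ustar x⟫ ∂cubeMeasure d) +
        ∫ x, ‖gradient u x - gradient ustar x‖ ^ 2 ∂cubeMeasure d := by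
    have hpt : ∀ x, ‖gradient u x‖ ^ 2 = ‖gradient ustar x‖ ^ 2 +
        2 * ⟪gradient ustar x, gradient u x - gradient ustar x⟫ +
        ‖gradient u x - gradient ustar x‖ ^ 2 := by
      intro x
      have hx : gradient ustar x + (gradient u x - gradient ustar x) = gradient u x := by abel
      rw [← hx, norm_add_sq_real]
      rw [hx]
    simp only [hpt]
    have h2 : Integrable (fun x =>
        2 * ⟪gradient ustar x, gradient u x - gradient ustar x⟫) (cubeMeasure d) :=
      hIinner.const_mul 2
    have h12 : Integrable (fun x => ‖gradient ustar x‖ ^ 2 +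
        2 * ⟪gradient ustar x, gradient u x - gradient ustar x⟫) (cubeMeasure d) :=
      hIgust.add h2
    rw [integral_add h12 hIgw, integral_add hIgust h2, integral_const_mul]
  -- expansion of the source term
  have hfexp : ∫ x, f x * u x ∂cubeMeasure d =
      (∫ x, f x * ustar x ∂cubeMeasure d) + ∫ x, f x * (u x - ustar x) ∂cubeMeasure d := by
    have hpt : ∀ x : EuclideanSpace ℝ (Fin d),
        f x * u x = f x * ustar x + f x * (u x - ustar x) := by intro x; ring
    simp only [hpt]
    rw [integral_add hIfust hIfw]
  -- energy difference identity
  have hE : poissonEnergy d f u - poissonEnergy d f ustar =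
      (∫ x, ‖gradient u x - gradient ustar x‖ ^ 2 ∂cubeMeasure d) +
        (∫ x, (u x - ustar x) ∂cubeMeasure d) ^ 2 := by
    simp only [poissonEnergy]
    rw [hgexp, hmean, hfexp, hweakw, hintw]
    ring
  -- H¹ distance identity (it is already in the right form)
  have hH1 : H1distSq d u ustar =
      (∫ x, (u x - ustar x) ^ 2 ∂cubeMeasure d) +
        ∫ x, ‖gradient u x - gradient ustar x‖ ^ 2 ∂cubeMeasure d := rfl
  set A := ∫ x, ‖gradient u x - gradient ustar x‖ ^ 2 ∂cubeMeasure d with hA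
  set c := ∫ x, (u x - ustar x) ∂cubeMeasure d with hcdef
  set S := ∫ x, (u x - ustar x) ^ 2 ∂cubeMeasure d with hS
  -- variance identity : ∫ (w - c)² = ∫ w² - c²
  have hvar : ∫ x, (u x - ustar x - c) ^ 2 ∂cubeMeasure d = S - c ^ 2 := by
    have hpt : ∀ x : EuclideanSpace ℝ (Fin d), (u x - ustar x - c) ^ 2 =
        (u x - ustar x) ^ 2 - 2 * c * (u x - ustar x) + c ^ 2 := by intro x; ring
    simp only [hpt]
    have h2 : Integrable (fun x => 2 * c * (u x - ustar x)) (cubeMeasure d) :=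
      hIw.const_mul (2 * c)
    have h12 : Integrable (fun x => (u x - ustar x) ^ 2 - 2 * c * (u x - ustar x))
        (cubeMeasure d) := hIw2.sub h2
    rw [integral_add h12 (integrable_const _), integral_sub hIw2 h2, integral_const_mul,
      integral_const]
    simp only [measure_univ, probReal_univ, ENNReal.toReal_one, smul_eq_mul, one_mul]
    ring
  have hvnn : 0 ≤ ∫ x, (u x - ustar x - c) ^ 2 ∂cubeMeasure d :=
    integral_nonneg fun x => sq_nonneg _
  have hAnn : 0 ≤ A := integral_nonneg fun x => sq_nonneg _
  -- Poincaré inequality for w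
  have hpoin : S - c ^ 2 ≤ cP * A := by
    have h := hpoincare (fun x => u x - ustar x) hwH1
    simp only [hgradw] at h
    rw [← hcdef, ← hA] at h
    rw [← hvar]
    exact h
  have hjensen : c ^ 2 ≤ S := by linarith [hvar ▸ hvnn]
  constructor
  · rw [hE, hH1]
    linarith
  · rw [hE, hH1]
    have h1 : (2 * cP + 1 : ℝ) ≤ max (2 * cP + 1) 2 := le_max_left _ _
    have h2 : (2 : ℝ) ≤ max (2 * cP + 1) 2 := le_max_right _ _
    nlinarith [mul_nonneg (by linarith : (0:ℝ) ≤ max (2 * cP + 1) 2 - (2 * cP + 1)) hAnn,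
      mul_nonneg (by linarith : (0:ℝ) ≤ max (2 * cP + 1) 2 - 2) (sq_nonneg c),
      mul_nonneg hcP hAnn]
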